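/- Let X be a compact totally disconnected Hausdorff space and let A be a unital C(X)-algebra all of whose fibres A_x are properly infinite. Then A is properly infinite. -/

import Mathlib

noncomputable section

/-- A projection in a *-ring. -/
def IsProjection {R : Type*} [Mul R] [Star R] (p : R) : Prop :=
  star p = p ∧ p * p = p

/-- Murray–von Neumann equivalence. -/
def MvNEquiv {R : Type*} [Mul R] [Star R] (p q : R) : Prop :=
  ∃ v : R, star v * v = p ∧ v * star v = q

/-- A properly infinite projection: two orthogonal subprojections each equivalent to `p`. -/
def IsProperlyInfinite {R : Type*} [Ring R] [StarRing R] (p : R) : Prop :=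
  ∃ v w : R, star v * v = p ∧ star w * w = p ∧
    p * (v * star v) = v * star v ∧ p * (w * star w) = w * star w ∧
    (v * star v) * (w * star w) = 0

/-- A full element: contained in no proper closed two-sided ideal. -/
def IsFullElem {R : Type*} [Ring R] [TopologicalSpace R] (a : R) : Prop :=
  ∀ I : TwoSidedIdeal R, IsClosed (I : Set R) → a ∈ I → I = ⊤

/-- `[u] = 0` in `K₁`: some stabilization `diag (u,1,…,1)` is connected to `1` in the unitary
group of a matrix algebra. -/
def K1Trivial {R : Type*} [Ring R] [StarRing R] [TopologicalSpace R] (u : R) : Prop :=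
  ∃ n : ℕ, ∃ w : unitary (Matrix (Fin (n + 1)) (Fin (n + 1)) R),
    w.val
      = Matrix.diagonal (fun i => if i = 0 then u else 1) ∧
    Joined (1 : unitary (Matrix (Fin (n + 1)) (Fin (n + 1)) R)) w

/-- `K₁`-injectivity of a unital C*-algebra. -/
def K1Injective (R : Type*) [Ring R] [StarRing R] [TopologicalSpace R] : Prop :=
  ∀ u : unitary R, K1Trivial (u : R) → Joined (1 : unitary R) u

/-- Homotopy of projections: a continuous path of projections from `p` to `q`. -/
def HomotopicProj {R : Type*} [Mul R] [Star R] [TopologicalSpace R] (p q : R) : Prop :=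
  ∃ f : C(unitInterval, R), f 0 = p ∧ f 1 = q ∧ ∀ t, IsProjection (f t)

/-- Stabilized projection `diag (p, 1, …, 1, 0, …, 0)` (with `k+1` ones). -/
def stabProj {R : Type*} [Ring R] (p : R) (k n : ℕ) : Matrix (Fin (n + 1)) (Fin (n + 1)) R :=
  Matrix.diagonal (fun i => if i = 0 then p else if (i : ℕ) ≤ k + 1 then 1 else 0)

/-- `[p] = [q]` in `K₀` of a unital ring, via stabilized Murray–von Neumann equivalence. -/
def K0Eq {R : Type*} [Ring R] [StarRing R] (p q : R) : Prop :=
  ∃ k n : ℕ, MvNEquiv (stabProj p k n) (stabProj q k n)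


/-- The closed two-sided ideal `I_F = C₀(X \ F)·A` of a `C(X)`-algebra determined by a closed
set `F ⊆ X` (here just as a closed subset of `A`). -/
def fibreIdeal {X : Type*} [TopologicalSpace X] {A : Type*} [CStarAlgebra A]
    (Θ : C(X, ℂ) →⋆ₐ[ℂ] A) (F : Set X) : Set A :=
  closure (Submodule.span ℂ
    {x : A | ∃ (f : C(X, ℂ)) (a : A), (∀ y ∈ F, f y = 0) ∧ x = Θ f * a} : Set A)

/-- The quotient `A/J` is (unitally) properly infinite: there are two elements of `A` which are
isometries with orthogonal range projections modulo `J`. -/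
def QuotProperlyInfinite {A : Type*} [CStarAlgebra A] (J : Set A) : Prop :=
  ∃ s t : A, star s * s - 1 ∈ J ∧ star t * t - 1 ∈ J ∧ (s * star s) * (t * star t) ∈ J


section Helpers

lemma invSqrt {A : Type*} [CStarAlgebra A] (g : A) (hg : IsSelfAdjoint g)
    (hgn : ‖g - 1‖ ≤ 1/100) :
    ∃ h : A, IsSelfAdjoint h ∧ h * g * h = 1 ∧ ‖h * h - 1‖ ≤ 1/50 := by
  obtain hA | hA := subsingleton_or_nontrivial A
  · refine ⟨1, by rw [IsSelfAdjoint]; simp, Subsingleton.elim _ _, ?_⟩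
    rw [Subsingleton.elim ((1:A)*1 - 1) 0]
    simpa using (by norm_num : (0:ℝ) ≤ 1/50)
  have hspec : ∀ x ∈ spectrum ℝ g, |x - 1| ≤ 1/100 := by
    intro x hx
    have h1 : x - 1 ∈ spectrum ℝ (g - algebraMap ℝ A 1) := by
      rw [← spectrum.sub_singleton_eq]
      exact Set.sub_mem_sub hx rfl
    have h2 := spectrum.norm_le_norm_of_mem h1
    simp only [map_one, Real.norm_eq_abs] at h2
    exact h2.trans hgn
  have hpos : ∀ x ∈ spectrum ℝ g, (99:ℝ)/100 ≤ x := by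
    intro x hx
    have := abs_le.mp (hspec x hx)
    linarith [this.1]
  set f : ℝ → ℝ := fun x => (Real.sqrt x)⁻¹ with hf
  have hfc : ContinuousOn f (spectrum ℝ g) := by
    refine Real.continuous_sqrt.continuousOn.inv₀ ?_
    intro x hx
    have := hpos x hx
    positivity
  have hidc : ContinuousOn (fun x : ℝ => x) (spectrum ℝ g) := continuousOn_id
  refine ⟨cfc f g, cfc_predicate f g, ?_, ?_⟩
  · have h1 : cfc f g * g * cfc f g = cfc (fun x => f x * x * f x) g := by
      rw [cfc_mul (fun x => f x * x) f g (hfc.mul hidc) hfc, cfc_mul f (fun x => x) g hfc hidc, cfc_id' ℝ g hg]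
    rw [h1, cfc_congr (g := fun _ : ℝ => (1:ℝ)) ?_, cfc_const 1 g hg, map_one]
    intro x hx
    have hx' : (0:ℝ) < x := lt_of_lt_of_le (by norm_num) (hpos x hx)
    simp only [hf]
    have hs : Real.sqrt x ≠ 0 := by positivity
    field_simp
    rw [Real.sq_sqrt hx'.le]
  · have h2 : cfc f g * cfc f g = cfc (fun x => f x * f x) g := (cfc_mul f f g hfc hfc).symm
    have h3 : (1 : A) = cfc (fun _ : ℝ => (1:ℝ)) g := by rw [cfc_const 1 g hg, map_one]
    rw [h2]
    rw [h3]
    rw [← cfc_sub (fun x => f x * f x) (fun _ : ℝ => (1:ℝ)) g (hfc.mul hfc) continuousOn_const]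
    refine norm_cfc_le (by norm_num) ?_
    intro x hx
    have hx9 : (99:ℝ)/100 ≤ x := hpos x hx
    have hx0 : (0:ℝ) < x := by linarith
    have habs := abs_le.mp (hspec x hx)
    have hfx : f x * f x = x⁻¹ := by
      simp only [hf, ← mul_inv]
      rw [Real.mul_self_sqrt hx0.le]
    rw [hfx, Real.norm_eq_abs, abs_le]
    have hxi : x⁻¹ ≤ 100/99 := by
      rw [inv_le_comm₀ hx0 (by norm_num)]
      linarith
    have hxi2 : (100:ℝ)/101 ≤ x⁻¹ := by
      rw [le_inv_comm₀ (by norm_num) hx0]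
      linarith
    constructor <;> linarith

lemma near_isometry {A : Type*} [CStarAlgebra A] (e s : A)
    (hee : e * e = e) (hes : star e = e) (hen : ‖e‖ ≤ 1)
    (hec : ∀ a : A, e * a = a * e)
    (hs : ‖e * (star s * s - 1)‖ ≤ 1/100) :
    ∃ v : A, star v * v = e ∧ e * v = v ∧
      ‖v * star v - e * (s * star s)‖ ≤ 1/32 := by
  have hee' : ∀ x : A, e * (e * x) = e * x := fun x => by rw [← mul_assoc, hee]
  have hmd : ∀ x z : A, e * (x * z) = x * (e * z) := fun x z => by
    rw [← mul_assoc, hec x, mul_assoc]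
  set b : A := e * (star s * s) with hb
  have hbe : b - e = e * (star s * s - 1) := by rw [hb]; noncomm_ring
  set g : A := b + (1 - e) with hg
  have hg1 : ‖g - 1‖ ≤ 1/100 := by
    have h1 : g - 1 = b - e := by rw [hg]; noncomm_ring
    rw [h1, hbe]; exact hs
  have hbse : b * e = b := by
    rw [hb, mul_assoc, ← hec (star s * s), ← mul_assoc, hee]
  have hgsa : IsSelfAdjoint g := by
    rw [IsSelfAdjoint]
    simp only [hg, hb, star_add, star_sub, star_mul, star_one, star_star, hes]
    rw [← hec (star s * s)]
  obtain ⟨h, hhsa, hgh, hh2⟩ := invSqrt g hgsa hg1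
  have hbg : g * e = b := by
    rw [hg, add_mul, sub_mul, one_mul, hee, sub_self, add_zero, hbse]
  have key : h * (b * h) = e := by
    calc h * (b * h) = h * (g * (e * h)) := by rw [← hbg]; simp only [mul_assoc]
    _ = h * (g * (h * e)) := by rw [hec h]
    _ = (h * g * h) * e := by simp only [mul_assoc]
    _ = e := by rw [hgh, one_mul]
  have hnb : ‖b‖ ≤ 101/100 := by
    calc ‖b‖ = ‖(b - e) + e‖ := by rw [sub_add_cancel]
    _ ≤ ‖b - e‖ + ‖e‖ := norm_add_le _ _
    _ ≤ 1/100 + 1 := by rw [hbe]; exact add_le_add hs hen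
    _ = 101/100 := by norm_num
  have h1 : star (s * e) * (s * e) = b := by
    rw [star_mul, hes, mul_assoc, ← mul_assoc (star s) s e, ← hec (star s * s),
      ← mul_assoc, hee, hb]
  have hnse : ‖s * e‖ * ‖s * e‖ ≤ 101/100 := by
    rw [← CStarRing.norm_star_mul_self, h1]; exact hnb
  have hsv : star (s * (h * e)) = e * (h * star s) := by
    simp only [star_mul, hes, hhsa.star_eq, mul_assoc]
  refine ⟨s * (h * e), ?_, ?_, ?_⟩
  · have hInner : e * (h * ((star s * s) * h)) = h * (b * h) := by
      rw [← mul_assoc, hec h, mul_assoc, ← mul_assoc e (star s * s) h, hb]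
    calc star (s * (h * e)) * (s * (h * e))
        = e * (h * (star s * (s * (h * e)))) := by rw [hsv]; simp only [mul_assoc]
      _ = e * (h * ((star s * s) * (h * e))) := by rw [← mul_assoc (star s) s]
      _ = (e * (h * ((star s * s) * h))) * e := by simp only [mul_assoc]
      _ = (h * (b * h)) * e := by rw [hInner]
      _ = e * e := by rw [key]
      _ = e := hee
  · rw [hec, mul_assoc, mul_assoc, hee]
  · have hvvs : (s * (h * e)) * star (s * (h * e)) = (s * e) * ((h * h) * star (s * e)) := by
      rw [hsv]
      simp only [star_mul, hes, mul_assoc, hmd, hee']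
    have hEs : e * (s * star s) = (s * e) * star (s * e) := by
      simp only [star_mul, hes, mul_assoc, hmd, hee']
    have hdiff : (s * (h * e)) * star (s * (h * e)) - e * (s * star s)
        = (s * e) * ((h * h - 1) * star (s * e)) := by
      rw [hvvs, hEs]; noncomm_ring
    rw [hdiff]
    calc ‖(s * e) * ((h * h - 1) * star (s * e))‖
        ≤ ‖s * e‖ * ‖(h * h - 1) * star (s * e)‖ := norm_mul_le _ _
      _ ≤ ‖s * e‖ * (‖h * h - 1‖ * ‖star (s * e)‖) := by
          gcongr; exact norm_mul_le _ _
      _ = ‖h * h - 1‖ * (‖s * e‖ * ‖s * e‖) := by rw [norm_star]; ring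
      _ ≤ 1/32 := by nlinarith [norm_nonneg (h*h-1), norm_nonneg (s*e)]

lemma corner_lemma {A : Type*} [CStarAlgebra A] (e s t : A)
    (hee : e * e = e) (hes : star e = e) (hen : ‖e‖ ≤ 1)
    (hec : ∀ a : A, e * a = a * e)
    (hs : ‖e * (star s * s - 1)‖ ≤ 1/100)
    (ht : ‖e * (star t * t - 1)‖ ≤ 1/100)
    (hst : ‖e * ((s * star s) * (t * star t))‖ ≤ 1/100) :
    ∃ v w : A, star v * v = e ∧ star w * w = e ∧ star v * w = 0 ∧ e * v = v ∧ e * w = w := by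
  have hee' : ∀ x : A, e * (e * x) = e * x := fun x => by rw [← mul_assoc, hee]
  have hmd : ∀ x z : A, e * (x * z) = x * (e * z) := fun x z => by
    rw [← mul_assoc, hec x, mul_assoc]
  obtain ⟨v, hvv, hev, hvp⟩ := near_isometry e s hee hes hen hec hs
  obtain ⟨u, huu, heu, hup⟩ := near_isometry e t hee hes hen hec ht
  -- basic facts
  have hv1 : ‖v‖ ≤ 1 := by
    have h1 : ‖v‖ * ‖v‖ = ‖e‖ := by rw [← CStarRing.norm_star_mul_self, hvv]
    nlinarith [norm_nonneg v]
  have hu1 : ‖u‖ ≤ 1 := by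
    have h1 : ‖u‖ * ‖u‖ = ‖e‖ := by rw [← CStarRing.norm_star_mul_self, huu]
    nlinarith [norm_nonneg u]
  have hve : v * e = v := by rw [← hec, hev]
  have hue : u * e = u := by rw [← hec, heu]
  have hsve : star v * e = star v := by rw [← hes, ← star_mul, hec, hve]
  have hsue : star u * e = star u := by rw [← hes, ← star_mul, hec, hue]
  have hesv : e * star v = star v := by rw [hec, hsve]
  have hesu : e * star u = star u := by rw [hec, hsue]
  set p : A := v * star v with hp
  set q : A := u * star u with hq
  have hpsa : star p = p := by rw [hp, star_mul, star_star]
  have hpq : ‖p * q‖ ≤ 1/10 := by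
    have hq1 : ‖q‖ ≤ 1 := by
      calc ‖q‖ ≤ ‖u‖ * ‖star u‖ := norm_mul_le _ _
      _ = ‖u‖ * ‖u‖ := by rw [norm_star]
      _ ≤ 1 := by nlinarith [norm_nonneg u]
    have hEs : ‖e * (s * star s)‖ ≤ 101/100 := by
      have h1 : e * (s * star s) = (e * s) * star (e * s) := by
        simp only [star_mul, hes, mul_assoc, hmd, hee']
        rw [hee, hec (star s)]
      have h2 : star (e * s) * (e * s) = e * (star s * s) := by
        simp only [star_mul, hes, mul_assoc, hmd, hee']
      have h3 : ‖e * (star s * s)‖ ≤ 101/100 := by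
        calc ‖e * (star s * s)‖ = ‖e * (star s * s - 1) + e‖ := by
              congr 1; noncomm_ring
        _ ≤ ‖e * (star s * s - 1)‖ + ‖e‖ := norm_add_le _ _
        _ ≤ 1/100 + 1 := add_le_add hs hen
        _ = 101/100 := by norm_num
      calc ‖e * (s * star s)‖ = ‖(e*s) * star (e*s)‖ := by rw [h1]
      _ = ‖e * s‖ * ‖e * s‖ := CStarRing.norm_self_mul_star
      _ = ‖star (e*s) * (e*s)‖ := (CStarRing.norm_star_mul_self).symm
      _ = ‖e * (star s * s)‖ := by rw [h2]
      _ ≤ 101/100 := h3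
    have hEsEt : ‖(e * (s * star s)) * (e * (t * star t))‖ ≤ 1/100 := by
      have h1 : (e * (s * star s)) * (e * (t * star t))
          = e * (e * ((s * star s) * (t * star t))) := by
        simp only [mul_assoc, hmd]
      rw [h1, hee']
      exact hst
    have hiden : p * q = (p - e * (s * star s)) * q
        + (e * (s * star s)) * (q - e * (t * star t))
        + (e * (s * star s)) * (e * (t * star t)) := by noncomm_ring
    calc ‖p * q‖ ≤ ‖(p - e * (s * star s)) * q‖
          + ‖(e * (s * star s)) * (q - e * (t * star t))‖
          + ‖(e * (s * star s)) * (e * (t * star t))‖ := by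
          rw [hiden]; exact (norm_add_le _ _).trans (by gcongr; exact norm_add_le _ _)
    _ ≤ ‖p - e * (s * star s)‖ * ‖q‖ + ‖e * (s * star s)‖ * ‖q - e * (t * star t)‖ + 1/100 := by
          gcongr <;> first | exact norm_mul_le _ _ | exact hEsEt
    _ ≤ (1/32) * 1 + (101/100) * (1/32) + 1/100 := by
          gcongr <;> first
            | exact hvp | exact hq1 | exact hEs | exact hup
            | exact norm_nonneg _
    _ ≤ 1/10 := by norm_num
  -- the correction
  set c : A := star v * u with hc
  have hcn : ‖c‖ ≤ 1/10 := by
    have h1 : c = star v * (p * q * u) := by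
      have e1 : star v * (p * (q * u)) = (star v * p) * (q * u) := by simp only [mul_assoc]
      have e2 : star v * p = star v := by
        rw [hp, ← mul_assoc, hvv, hesv]
      have e3 : q * u = u := by
        rw [hq, mul_assoc, huu, hue]
      rw [hc, mul_assoc, e1, e2, e3]
    calc ‖c‖ = ‖star v * (p * q * u)‖ := by rw [h1]
    _ ≤ ‖star v‖ * ‖p * q * u‖ := norm_mul_le _ _
    _ ≤ ‖star v‖ * (‖p * q‖ * ‖u‖) := by gcongr; exact norm_mul_le _ _
    _ ≤ 1 * ((1/10) * 1) := by
        rw [norm_star]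
        gcongr <;> first | exact hv1 | exact hpq | exact hu1 | exact norm_nonneg _
    _ = 1/10 := by norm_num
  set G : A := 1 - star c * c with hG
  have hGsa : IsSelfAdjoint G := by
    rw [IsSelfAdjoint, hG]
    simp [star_sub, star_mul, star_star]
  have hG1 : ‖G - 1‖ ≤ 1/100 := by
    have h1 : G - 1 = -(star c * c) := by rw [hG]; abel
    rw [h1, norm_neg, CStarRing.norm_star_mul_self]
    nlinarith [norm_nonneg c]
  obtain ⟨H, hHsa, hHGH, _⟩ := invSqrt G hGsa hG1
  have hce : c * e = c := by rw [hc, mul_assoc, hue]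
  have hGe : G * e = e - star c * c := by
    rw [hG, sub_mul, one_mul, mul_assoc, hce]
  -- algebraic facts about p
  have hep : e * p = p := by rw [hp, ← mul_assoc, hev]
  have hpe : p * e = p := by rw [← hec, hep]
  have hpp : p * p = p := by
    rw [hp, mul_assoc, ← mul_assoc (star v) v (star v), hvv, hesv]
  have hepep : (e - p) * (e - p) = e - p := by
    rw [sub_mul, mul_sub, mul_sub, hee, hep, hpe, hpp]; abel
  have hepsa : star (e - p) = e - p := by rw [star_sub, hes, hpsa]
  -- w
  refine ⟨v, ((e - p) * u) * (H * e), hvv, ?_, ?_, hev, ?_⟩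
  · -- star w * w = e
    have htt : star ((e - p) * u) * ((e - p) * u) = G * e := by
      have h1 : star ((e - p) * u) * ((e - p) * u) = star u * ((e - p) * u) := by
        rw [star_mul, hepsa, mul_assoc, ← mul_assoc (e-p) (e-p) u, hepep]
      have h2 : star u * ((e - p) * u) = star u * (e * u) - star u * (p * u) := by
        rw [sub_mul, mul_sub]
      have h3 : star u * (e * u) = e := by rw [heu, huu]
      have h4 : star u * (p * u) = star c * c := by
        rw [hp, hc, mul_assoc]
        simp only [star_mul, star_star, mul_assoc]
      rw [h1, h2, h3, h4, hGe]
    calc star (((e - p) * u) * (H * e)) * (((e - p) * u) * (H * e))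
        = (e * H) * ((star ((e-p)*u) * ((e-p)*u)) * (H * e)) := by
          simp only [star_mul, hes, hHsa.star_eq, mul_assoc]
      _ = (e * H) * ((G * e) * (H * e)) := by rw [htt]
      _ = (e * H) * (G * (H * (e * e))) := by
          simp only [mul_assoc]
          rw [hmd H e]
      _ = e * (H * (G * (H * e))) := by rw [hee]; simp only [mul_assoc]
      _ = e * ((H * G * H) * e) := by simp only [mul_assoc]
      _ = e * (1 * e) := by rw [hHGH]
      _ = e := by rw [one_mul, hee]
  · -- star v * w = 0
    have h1 : star v * ((e - p) * u) = 0 := by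
      have h2 : star v * ((e - p) * u) = (star v * e - star v * p) * u := by
        simp only [mul_assoc, mul_sub, sub_mul]
      have h3 : star v * p = star v := by rw [hp, ← mul_assoc, hvv, hesv]
      rw [h2, hsve, h3, sub_self, zero_mul]
    rw [← mul_assoc, h1, zero_mul]
  · -- e * w = w
    have h1 : e * ((e - p) * u) = (e - p) * u := by
      rw [← mul_assoc, mul_sub, hee, hep]
    rw [← mul_assoc, h1]

section Chi
variable {X : Type*} [TopologicalSpace X]

/-- characteristic function of a clopen set -/
def chi (U : Set X) (hU : IsClopen U) : C(X, ℂ) :=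
  ⟨Set.indicator U 1, by
    have := (LocallyConstant.charFn ℂ hU).continuous
    rwa [LocallyConstant.coe_charFn] at this⟩

lemma chi_apply_mem {U : Set X} (hU : IsClopen U) {x : X} (hx : x ∈ U) :
    chi U hU x = 1 := by
  simp [chi, Set.indicator_of_mem hx]

lemma chi_apply_not_mem {U : Set X} (hU : IsClopen U) {x : X} (hx : x ∉ U) :
    chi U hU x = 0 := by
  simp [chi, Set.indicator_of_notMem hx]

lemma chi_mul (U V : Set X) (hU : IsClopen U) (hV : IsClopen V) :
    chi U hU * chi V hV = chi (U ∩ V) (hU.inter hV) := by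
  ext x
  simp only [ContinuousMap.mul_apply]
  by_cases hx : x ∈ U <;> by_cases hy : x ∈ V
  · rw [chi_apply_mem (hU.inter hV) (Set.mem_inter hx hy),
      chi_apply_mem hU hx, chi_apply_mem hV hy, one_mul]
  · rw [chi_apply_not_mem (hU.inter hV) (fun h => hy (Set.mem_of_mem_inter_right h)),
      chi_apply_not_mem hV hy, mul_zero]
  · rw [chi_apply_not_mem (hU.inter hV) (fun h => hx (Set.mem_of_mem_inter_left h)),
      chi_apply_not_mem hU hx, zero_mul]
  · rw [chi_apply_not_mem (hU.inter hV) (fun h => hy (Set.mem_of_mem_inter_right h)),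
      chi_apply_not_mem hV hy, mul_zero]

lemma chi_star (U : Set X) (hU : IsClopen U) : star (chi U hU) = chi U hU := by
  ext x
  simp only [ContinuousMap.star_apply]
  by_cases hx : x ∈ U
  · rw [chi_apply_mem hU hx]; simp
  · rw [chi_apply_not_mem hU hx]; simp

lemma chi_empty : chi (∅ : Set X) isClopen_empty = 0 := by
  ext x
  rw [chi_apply_not_mem _ (Set.notMem_empty x)]
  simp

variable [CompactSpace X] [T2Space X] [TotallyDisconnectedSpace X]
variable {A : Type*} [CStarAlgebra A]

lemma chi_norm_le (U : Set X) (hU : IsClopen U) : ‖chi U hU‖ ≤ 1 := by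
  refine (ContinuousMap.norm_le _ zero_le_one).mpr fun x => ?_
  by_cases hx : x ∈ U
  · rw [chi_apply_mem hU hx]; simp
  · rw [chi_apply_not_mem hU hx]; simp

lemma theta_norm_le (Θ : C(X, ℂ) →⋆ₐ[ℂ] A) (f : C(X, ℂ)) : ‖Θ f‖ ≤ ‖f‖ :=
  NonUnitalStarAlgHom.norm_apply_le Θ f

lemma chi_mono (Θ : C(X, ℂ) →⋆ₐ[ℂ] A) {U V : Set X} (hU : IsClopen U) (hV : IsClopen V)
    (hUV : U ⊆ V) (b : A) :
    ‖Θ (chi U hU) * b‖ ≤ ‖Θ (chi V hV) * b‖ := by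
  have h1 : chi U hU * chi V hV = chi U hU := by
    ext y
    simp only [ContinuousMap.mul_apply]
    by_cases hy : y ∈ U
    · rw [chi_apply_mem hU hy, chi_apply_mem hV (hUV hy), one_mul]
    · rw [chi_apply_not_mem hU hy, zero_mul]
  calc ‖Θ (chi U hU) * b‖ = ‖Θ (chi U hU) * (Θ (chi V hV) * b)‖ := by
        rw [← mul_assoc, ← map_mul, h1]
  _ ≤ ‖Θ (chi U hU)‖ * ‖Θ (chi V hV) * b‖ := norm_mul_le _ _
  _ ≤ 1 * ‖Θ (chi V hV) * b‖ := by
      gcongr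
      exact (theta_norm_le Θ _).trans (chi_norm_le U hU)
  _ = ‖Θ (chi V hV) * b‖ := one_mul _

lemma fibre_small (Θ : C(X, ℂ) →⋆ₐ[ℂ] A) (x : X) {b : A}
    (hb : b ∈ fibreIdeal Θ {x}) {ε : ℝ} (hε : 0 < ε) :
    ∃ (U : Set X) (hU : IsClopen U), x ∈ U ∧ ‖Θ (chi U hU) * b‖ ≤ ε := by
  set T : Set A := {b : A | ∀ ε : ℝ, 0 < ε → ∃ (U : Set X) (hU : IsClopen U),
    x ∈ U ∧ ‖Θ (chi U hU) * b‖ ≤ ε} with hT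
  set S : Set A := {z : A | ∃ (f : C(X, ℂ)) (a : A), (∀ y ∈ ({x} : Set X), f y = 0) ∧
    z = Θ f * a} with hS
  have hSpan : (Submodule.span ℂ S : Set A) ⊆ T := by
    intro z hz
    induction hz using Submodule.span_induction with
    | mem z hzS =>
        obtain ⟨f, a, hf0, rfl⟩ := hzS
        intro ε hε
        have hfx : f x = 0 := hf0 x rfl
        set δ : ℝ := ε / (‖a‖ + 1) with hδ
        have hδpos : 0 < δ := by positivity
        have hxV : x ∈ f ⁻¹' Metric.ball 0 δ := by
          simp [hfx, hδpos]
        obtain ⟨U, hU, hxU, hUV⟩ := compact_exists_isClopen_in_isOpen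
          (f.continuous.isOpen_preimage _ Metric.isOpen_ball) hxV
        refine ⟨U, hU, hxU, ?_⟩
        have hnorm : ‖chi U hU * f‖ ≤ δ := by
          refine (ContinuousMap.norm_le _ hδpos.le).mpr fun y => ?_
          simp only [ContinuousMap.mul_apply]
          by_cases hy : y ∈ U
          · have h5 : f y ∈ Metric.ball (0:ℂ) δ := hUV hy
            rw [chi_apply_mem hU hy, one_mul]
            exact (by simpa [dist_eq_norm] using h5 : ‖f y‖ < δ).le
          · rw [chi_apply_not_mem hU hy, zero_mul]
            simp [hδpos.le]
        calc ‖Θ (chi U hU) * (Θ f * a)‖ = ‖Θ (chi U hU * f) * a‖ := by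
              rw [map_mul, mul_assoc]
        _ ≤ ‖Θ (chi U hU * f)‖ * ‖a‖ := norm_mul_le _ _
        _ ≤ δ * ‖a‖ := by
            gcongr
            exact (theta_norm_le Θ _).trans hnorm
        _ ≤ ε := by
            rw [hδ, div_mul_eq_mul_div, div_le_iff₀ (by positivity)]
            nlinarith [norm_nonneg a]
    | zero =>
        intro ε hε
        exact ⟨Set.univ, isClopen_univ, Set.mem_univ x, by simp [hε.le]⟩
    | add z₁ z₂ h₁ h₂ ih₁ ih₂ =>
        intro ε hε
        obtain ⟨U₁, hU₁, hx₁, hn₁⟩ := ih₁ (ε/2) (by positivity)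
        obtain ⟨U₂, hU₂, hx₂, hn₂⟩ := ih₂ (ε/2) (by positivity)
        refine ⟨U₁ ∩ U₂, hU₁.inter hU₂, ⟨hx₁, hx₂⟩, ?_⟩
        calc ‖Θ (chi (U₁ ∩ U₂) (hU₁.inter hU₂)) * (z₁ + z₂)‖
            ≤ ‖Θ (chi (U₁ ∩ U₂) (hU₁.inter hU₂)) * z₁‖
              + ‖Θ (chi (U₁ ∩ U₂) (hU₁.inter hU₂)) * z₂‖ := by
              rw [mul_add]; exact norm_add_le _ _
        _ ≤ ‖Θ (chi U₁ hU₁) * z₁‖ + ‖Θ (chi U₂ hU₂) * z₂‖ := by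
              gcongr
              · exact chi_mono Θ _ hU₁ Set.inter_subset_left z₁
              · exact chi_mono Θ _ hU₂ Set.inter_subset_right z₂
        _ ≤ ε/2 + ε/2 := add_le_add hn₁ hn₂
        _ = ε := by ring
    | smul c z hzmem ih =>
        intro ε hε
        obtain ⟨U, hU, hxU, hn⟩ := ih (ε / (‖c‖ + 1)) (by positivity)
        refine ⟨U, hU, hxU, ?_⟩
        calc ‖Θ (chi U hU) * (c • z)‖ = ‖c‖ * ‖Θ (chi U hU) * z‖ := by
              rw [mul_smul_comm, norm_smul]
        _ ≤ ‖c‖ * (ε / (‖c‖ + 1)) := by gcongr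
        _ ≤ ε := by
            rw [mul_div_assoc']
            rw [div_le_iff₀ (by positivity)]
            nlinarith [norm_nonneg c]
  -- closure
  rw [fibreIdeal, ← hS] at hb
  have hcl : ∀ ε : ℝ, 0 < ε → ∃ (U : Set X) (hU : IsClopen U),
      x ∈ U ∧ ‖Θ (chi U hU) * b‖ ≤ ε := by
    intro ε hε
    obtain ⟨b', hb'S, hb'd⟩ := Metric.mem_closure_iff.mp hb (ε/2) (by positivity)
    obtain ⟨U, hU, hxU, hn⟩ := hSpan hb'S (ε/2) (by positivity)
    refine ⟨U, hU, hxU, ?_⟩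
    calc ‖Θ (chi U hU) * b‖ = ‖Θ (chi U hU) * (b - b') + Θ (chi U hU) * b'‖ := by
          rw [← mul_add]
          congr 2
          abel
    _ ≤ ‖Θ (chi U hU) * (b - b')‖ + ‖Θ (chi U hU) * b'‖ := norm_add_le _ _
    _ ≤ ‖Θ (chi U hU)‖ * ‖b - b'‖ + ε/2 := add_le_add (norm_mul_le _ _) hn
    _ ≤ 1 * (ε/2) + ε/2 := by
        gcongr
        · exact (theta_norm_le Θ _).trans (chi_norm_le U hU)
        · rw [← dist_eq_norm]; exact hb'd.le
    _ = ε := by ring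
  exact hcl ε hε

end Chi

lemma chi_congr {X : Type*} [TopologicalSpace X] {U V : Set X} (h : U = V)
    (hU : IsClopen U) (hV : IsClopen V) : chi U hU = chi V hV := by
  subst h; rfl

end Helpers

/-- a unital `C(X)`-algebra over a compact totally disconnected Hausdorff space
with properly infinite fibres is properly infinite. -/
theorem stmt18 {X : Type*} [TopologicalSpace X] [CompactSpace X] [T2Space X]
    [TotallyDisconnectedSpace X] {A : Type*} [CStarAlgebra A]
    (Θ : C(X, ℂ) →⋆ₐ[ℂ] A) (hcent : ∀ (f : C(X, ℂ)) (a : A), Θ f * a = a * Θ f)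
    (hfibres : ∀ x : X, QuotProperlyInfinite (fibreIdeal Θ {x})) :
    IsProperlyInfinite (1 : A) := by
  classical
  have hloc : ∀ x : X, ∃ (U : Set X) (hU : IsClopen U), x ∈ U ∧
      ∃ s t : A, ‖Θ (chi U hU) * (star s * s - 1)‖ ≤ 1/100 ∧
        ‖Θ (chi U hU) * (star t * t - 1)‖ ≤ 1/100 ∧
        ‖Θ (chi U hU) * ((s * star s) * (t * star t))‖ ≤ 1/100 := by
    intro x
    obtain ⟨s, t, h1, h2, h3⟩ := hfibres x
    obtain ⟨U₁, hU₁, hx₁, hn₁⟩ := fibre_small Θ x h1 (by norm_num : (0:ℝ) < 1/100)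
    obtain ⟨U₂, hU₂, hx₂, hn₂⟩ := fibre_small Θ x h2 (by norm_num : (0:ℝ) < 1/100)
    obtain ⟨U₃, hU₃, hx₃, hn₃⟩ := fibre_small Θ x h3 (by norm_num : (0:ℝ) < 1/100)
    refine ⟨U₁ ∩ (U₂ ∩ U₃), hU₁.inter (hU₂.inter hU₃), ⟨hx₁, hx₂, hx₃⟩, s, t, ?_, ?_, ?_⟩
    · exact (chi_mono Θ _ hU₁ Set.inter_subset_left _).trans hn₁
    · exact (chi_mono Θ _ hU₂ (Set.subset_inter_iff.mp Set.inter_subset_right).1 _).trans hn₂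
    · exact (chi_mono Θ _ hU₃ (Set.subset_inter_iff.mp Set.inter_subset_right).2 _).trans hn₃
  choose U hUcl hxU sf tf hb1 hb2 hb3 using hloc
  obtain ⟨T, hT⟩ := isCompact_univ.elim_finite_subcover (fun x : X => U x)
      (fun x => (hUcl x).2) (fun y _ => Set.mem_iUnion.mpr ⟨y, hxU y⟩)
  set n := T.card with hn
  have σ : Fin n ≃ {x // x ∈ T} := (Fintype.equivFinOfCardEq (Fintype.card_coe T)).symm
  set V : Fin n → Set X := fun i => U ((σ i : X)) with hV
  have hVcl : ∀ i, IsClopen (V i) := fun i => hUcl _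
  have hVcover : ∀ y : X, ∃ i, y ∈ V i := by
    intro y
    have h0 := hT (Set.mem_univ y)
    rw [Set.mem_iUnion₂] at h0
    obtain ⟨x, hxT, hyx⟩ := h0
    exact ⟨σ.symm ⟨x, hxT⟩, by simp only [hV, Equiv.apply_symm_apply]; exact hyx⟩
  set F : Fin n → Set X := fun i => V i \ ⋃ j : Fin n, ⋃ _ : j < i, V j with hF
  have hFcl : ∀ i, IsClopen (F i) :=
    fun i => (hVcl i).diff (isClopen_iUnion_of_finite fun j =>
      isClopen_iUnion_of_finite fun _ => hVcl j)
  have hFV : ∀ i, F i ⊆ V i := fun i => Set.diff_subset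
  have hFdisj : ∀ i j, i ≠ j → F i ∩ F j = ∅ := by
    intro i j hij
    rcases lt_or_gt_of_ne hij with h | h
    · ext y
      simp only [Set.mem_inter_iff, Set.mem_empty_iff_false, iff_false, not_and]
      intro hyi hyj
      exact hyj.2 (Set.mem_iUnion.mpr ⟨i, Set.mem_iUnion.mpr ⟨h, hyi.1⟩⟩)
    · ext y
      simp only [Set.mem_inter_iff, Set.mem_empty_iff_false, iff_false, not_and]
      intro hyi hyj
      exact hyi.2 (Set.mem_iUnion.mpr ⟨j, Set.mem_iUnion.mpr ⟨h, hyj.1⟩⟩)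
  have hsum : (∑ i : Fin n, chi (F i) (hFcl i)) = 1 := by
    ext y
    rw [ContinuousMap.sum_apply, ContinuousMap.one_apply]
    have hex : ∃ k : ℕ, ∃ hk : k < n, y ∈ V ⟨k, hk⟩ := by
      obtain ⟨i, hi⟩ := hVcover y
      exact ⟨i.1, i.2, hi⟩
    obtain ⟨hk, hyk⟩ := Nat.find_spec hex
    set i₀ : Fin n := ⟨Nat.find hex, hk⟩ with hi₀
    have hyF : y ∈ F i₀ := by
      refine ⟨hyk, ?_⟩
      intro hmem
      rw [Set.mem_iUnion] at hmem
      obtain ⟨j, hj⟩ := hmem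
      rw [Set.mem_iUnion] at hj
      obtain ⟨hji, hyj⟩ := hj
      exact Nat.find_min hex hji ⟨j.2, hyj⟩
    have hyFn : ∀ j : Fin n, j ≠ i₀ → y ∉ F j := by
      intro j hj hyFj
      have := hFdisj j i₀ hj
      have : y ∈ F j ∩ F i₀ := ⟨hyFj, hyF⟩
      rw [hFdisj j i₀ hj] at this
      exact this
    rw [Finset.sum_eq_single i₀
      (fun j _ hj => chi_apply_not_mem (hFcl j) (hyFn j hj))
      (fun h => absurd (Finset.mem_univ i₀) h)]
    exact chi_apply_mem _ hyF
  set e : Fin n → A := fun i => Θ (chi (F i) (hFcl i)) with he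
  have hesum : (∑ i : Fin n, e i) = 1 := by rw [he, ← map_sum, hsum, map_one]
  have hestar : ∀ i, star (e i) = e i := fun i => by rw [he, ← map_star, chi_star]
  have heidem : ∀ i, e i * e i = e i := fun i => by
    rw [he, ← map_mul, chi_mul, chi_congr (Set.inter_self (F i)) _ (hFcl i)]
  have heorth : ∀ i j, i ≠ j → e i * e j = 0 := fun i j hij => by
    rw [he, ← map_mul, chi_mul, chi_congr (hFdisj i j hij) _ isClopen_empty,
      chi_empty, map_zero]
  have hecent : ∀ (i) (a : A), e i * a = a * e i := fun i a => hcent _ a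
  have henorm : ∀ i, ‖e i‖ ≤ 1 := fun i => (theta_norm_le Θ _).trans (chi_norm_le _ _)
  have hcorner : ∀ i : Fin n, ∃ v w : A, star v * v = e i ∧ star w * w = e i ∧
      star v * w = 0 ∧ e i * v = v ∧ e i * w = w := by
    intro i
    refine corner_lemma (e i) (sf (σ i)) (tf (σ i)) (heidem i) (hestar i) (henorm i)
      (hecent i) ?_ ?_ ?_
    · exact (chi_mono Θ (hFcl i) (hUcl _) (hFV i) _).trans (hb1 (σ i))
    · exact (chi_mono Θ (hFcl i) (hUcl _) (hFV i) _).trans (hb2 (σ i))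
    · exact (chi_mono Θ (hFcl i) (hUcl _) (hFV i) _).trans (hb3 (σ i))
  choose vf wf hvf hwf hvwf hevf hewf using hcorner
  have horth : ∀ {a c : A} {i j : Fin n}, i ≠ j → e i * a = a → e j * c = c →
      star a * c = 0 := by
    intro a c i j hij ha hc
    have h1 : star a = star a * e i := by
      conv_lhs => rw [← ha]
      rw [star_mul, hestar]
    rw [h1, ← hc, mul_assoc, ← mul_assoc (e i) (e j) c, heorth i j hij, zero_mul, mul_zero]
  set v : A := ∑ i : Fin n, vf i with hv
  set w : A := ∑ i : Fin n, wf i with hw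
  have hvv : star v * v = 1 := by
    rw [hv, star_sum, Finset.sum_mul_sum, ← hesum]
    refine Finset.sum_congr rfl fun i _ => ?_
    rw [Finset.sum_eq_single i (fun j _ hj => horth (Ne.symm hj) (hevf i) (hevf j))
      (fun h => absurd (Finset.mem_univ i) h), hvf i]
  have hww : star w * w = 1 := by
    rw [hw, star_sum, Finset.sum_mul_sum, ← hesum]
    refine Finset.sum_congr rfl fun i _ => ?_
    rw [Finset.sum_eq_single i (fun j _ hj => horth (Ne.symm hj) (hewf i) (hewf j))
      (fun h => absurd (Finset.mem_univ i) h), hwf i]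
  have hvw : star v * w = 0 := by
    rw [hv, hw, star_sum, Finset.sum_mul_sum]
    refine Finset.sum_eq_zero fun i _ => Finset.sum_eq_zero fun j _ => ?_
    by_cases hij : i = j
    · subst hij; exact hvwf i
    · exact horth hij (hevf i) (hewf j)
  refine ⟨v, w, hvv, hww, one_mul _, one_mul _, ?_⟩
  calc (v * star v) * (w * star w) = v * ((star v * w) * star w) := by
        simp only [mul_assoc]
  _ = 0 := by rw [hvw, zero_mul, mul_zero]
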